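/- Fix a rooted spanning tree T of weighted graph G and let P' = (p_1,…,p_k) and Q' = (q_1,…,l_ℓ) be sequences of edges from two vertex-disjoint paths of T, where P' is ordered root-wards, all edges of P' are independent of all edges of Q', and Q' is ordered leaf-wards. Define M[i,j] = weight of the cut determined by {p_i, q_j}. Then M satisfies the Monge condition: M[i,j] - M[i,j+1] ≥ M[i+1,j] - M[i+1,j+1] for all valid i, j; equivalently M[i,j] + M[i+1,j+1] ≥ M[i,j+1] + M[i+1,j]. -/
import Mathlib


open Finset

/-- Total weight of graph edges with one endpoint in `A` and the other in `B`
(summed over ordered pairs). -/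
def betw {V : Type*} [Fintype V] (w : V → V → ℝ) (A B : Finset V) : ℝ :=
  ∑ u ∈ A, ∑ v ∈ B, w u v

/-- Weight of the cut `(S, V \\ S)`: total weight of edges leaving `S`. -/
def cutw {V : Type*} [Fintype V] [DecidableEq V] (w : V → V → ℝ) (S : Finset V) : ℝ :=
  betw w S Sᶜ

lemma betw_union_left {V : Type*} [Fintype V] [DecidableEq V] (w : V → V → ℝ) {A B : Finset V}
    (h : Disjoint A B) : ∀ C, betw w (A ∪ B) C = betw w A C + betw w B C := by
  intro C
  simp [betw, Finset.sum_union h]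

lemma betw_union_right {V : Type*} [Fintype V] [DecidableEq V] (w : V → V → ℝ)
    {B C : Finset V} (h : Disjoint B C) : ∀ A, betw w A (B ∪ C) = betw w A B + betw w A C := by
  intro A
  simp [betw, Finset.sum_union h, Finset.sum_add_distrib]

lemma betw_nonneg {V : Type*} [Fintype V] {w : V → V → ℝ} (hnn : ∀ u v, 0 ≤ w u v)
    (A B : Finset V) : 0 ≤ betw w A B :=
  Finset.sum_nonneg fun u _ => Finset.sum_nonneg fun v _ => hnn u v

lemma cutw_eq {V : Type*} [Fintype V] [DecidableEq V] (w : V → V → ℝ) (S : Finset V) :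
    cutw w S = betw w S univ - betw w S S := by
  unfold cutw betw
  rw [eq_sub_iff_add_eq, ← Finset.sum_add_distrib]
  refine Finset.sum_congr rfl fun u _ => ?_
  rw [Finset.sum_compl_add_sum]

lemma cutw_union {V : Type*} [Fintype V] [DecidableEq V] (w : V → V → ℝ) {S T : Finset V}
    (h : Disjoint S T) :
    cutw w (S ∪ T) = betw w S univ + betw w T univ
      - betw w S S - betw w S T - betw w T S - betw w T T := by
  rw [cutw_eq, betw_union_left w h, betw_union_left w h,
    betw_union_right w h, betw_union_right w h]
  ring

/-- Monge condition, independent case. `P i` is the subtree below the `i`-th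
edge of `P'` (ordered root-wards, so the subtrees increase), `Q j` the subtree
below the `j`-th edge of `Q'` (ordered leaf-wards, so the subtrees decrease);
all edges of `P'` are independent of all edges of `Q'`. With
`M i j := cutw (P i ∪ Q j)` the weight of the cut determined by the pair, we have
`M[i,j] + M[i+1,j+1] ≥ M[i,j+1] + M[i+1,j]`, i.e.
`M[i,j] - M[i,j+1] ≥ M[i+1,j] - M[i+1,j+1]`. -/
theorem stmt_7 {V : Type*} [Fintype V] [DecidableEq V] (w : V → V → ℝ)
    (hsym : ∀ u v, w u v = w v u) (hnn : ∀ u v, 0 ≤ w u v)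
    (P Q : ℕ → Finset V) (hP : Monotone P) (hQ : Antitone Q)
    (hdisj : ∀ i j, Disjoint (P i) (Q j)) :
    ∀ i j, cutw w (P i ∪ Q (j+1)) + cutw w (P (i+1) ∪ Q j) ≤
      cutw w (P i ∪ Q j) + cutw w (P (i+1) ∪ Q (j+1)) := by
  intro i j
  set A := P i with hA
  set B := Q (j+1) with hB
  set D := P (i+1) \ P i with hD
  set E := Q j \ Q (j+1) with hE
  have hPA : P (i+1) = A ∪ D := (Finset.union_sdiff_of_subset (hP (Nat.le_succ i))).symm
  have hQB : Q j = B ∪ E := (Finset.union_sdiff_of_subset (hQ (Nat.le_succ j))).symm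
  have hAD : Disjoint A D := Finset.disjoint_sdiff
  have hBE : Disjoint B E := Finset.disjoint_sdiff
  have hAB : Disjoint A B := hdisj i (j+1)
  have hAE : Disjoint A E := (hdisj i j).mono_right Finset.sdiff_subset
  have hDB : Disjoint D B := (hdisj (i+1) (j+1)).mono_left Finset.sdiff_subset
  have hDE : Disjoint D E :=
    ((hdisj (i+1) j).mono Finset.sdiff_subset Finset.sdiff_subset)
  have hADB : Disjoint (A ∪ D) B := Finset.disjoint_union_left.2 ⟨hAB, hDB⟩
  have hABE : Disjoint A (B ∪ E) := Finset.disjoint_union_right.2 ⟨hAB, hAE⟩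
  have hADBE : Disjoint (A ∪ D) (B ∪ E) :=
    Finset.disjoint_union_left.2 ⟨hABE, Finset.disjoint_union_right.2 ⟨hDB, hDE⟩⟩
  rw [hPA, hQB, cutw_union w hAB, cutw_union w hADB, cutw_union w hABE,
    cutw_union w hADBE]
  simp only [betw_union_left w hAD, betw_union_left w hBE,
    betw_union_right w hAD, betw_union_right w hBE]
  have h1 := betw_nonneg hnn D E
  have h2 := betw_nonneg hnn E D
  linarith
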